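/- Let M be the V_2×V_2 matrix whose (w,v) entry is (A^{-1})_{wv} for w,v ∈ V_2 (equivalently, whose columns are the vectors −E*_v|_{V_2}, v ∈ V_2). Then M is invertible, M^{-1} is symmetric and negative definite, and M^{-1} agrees with the principal submatrix (A_{wv})_{w,v∈V_2} in every off-diagonal entry and in every diagonal entry indexed by a vertex of V_2 \ B; i.e., M^{-1} is a modified intersection form of the subgraph on V_2, modified at most in the diagonal entries indexed by the boundary B. -/

import Mathlib

open Matrix

open scoped Classical

noncomputable section

namespace Plumbing

variable {V : Type*} [Fintype V] [DecidableEq V]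

/-- The rational matrix associated with the integral intersection matrix. -/
def Aq (A : Matrix V V ℤ) : Matrix V V ℚ := A.map fun n => (n : ℚ)

/-- Negative definiteness of the intersection form. -/
def NegDef (A : Matrix V V ℤ) : Prop :=
  ∀ x : V → ℚ, x ≠ 0 → x ⬝ᵥ (Aq A).mulVec x < 0

/-- The dual base element `E*_v`, the `v`-th column of `−A⁻¹`. -/
def Estar (A : Matrix V V ℤ) (v : V) : V → ℚ := fun w => (-(Aq A)⁻¹) w v

/-- Membership in the dual lattice `L' = {x ∈ ℚ^V : Ax ∈ ℤ^V}`. -/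
def memLp (A : Matrix V V ℤ) (x : V → ℚ) : Prop :=
  ∀ v, ∃ n : ℤ, (Aq A).mulVec x v = (n : ℚ)

/-- `x` and `y` are in the same class of `H = L'/L`, i.e. `x - y ∈ L`. -/
def sameClass {W : Type*} (x y : W → ℚ) : Prop := ∀ w, ∃ n : ℤ, x w - y w = (n : ℚ)

/-- The valency of a vertex. -/
def deg {W : Type*} (G : SimpleGraph W) (w : W) : ℕ := (G.neighborSet w).ncard

/-- The coefficients `c_v(k)`. -/
def ccoef (d k : ℕ) : ℤ :=
  if 2 ≤ d then (-1 : ℤ) ^ k * (Nat.choose (d - 2) k) else (Nat.choose (k + 1 - d) k)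

/-- The coefficient `z(l')` of the multivariable series `Z(t)`. -/
def zcoef (A : Matrix V V ℤ) (δ : V → ℕ) (l' : V → ℚ) : ℤ :=
  ∑ᶠ k : V → ℕ,
    if (∑ v, (k v : ℚ) • Estar A v) = l' then ∏ v, ccoef (δ v) (k v) else 0

/-- The counting function `Q_{[x]}(x)`. -/
def Qcount (A : Matrix V V ℤ) (δ : V → ℕ) (x : V → ℚ) : ℤ :=
  ∑ᶠ l' : V → ℚ,
    if memLp A l' ∧ sameClass l' x ∧ ¬ x ≤ l' then zcoef A δ l' else 0

/-- The counting function `Q_{[x],I}(x)` of the reduced series. -/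
def QcountI (A : Matrix V V ℤ) (δ : V → ℕ) (I : Set V) (x : V → ℚ) : ℤ :=
  ∑ᶠ l' : V → ℚ,
    if memLp A l' ∧ sameClass l' x ∧ ¬ (∀ v ∈ I, x v ≤ l' v) then zcoef A δ l' else 0

/-- The counting function `Q_{0,I}(x)` on the integral lattice. -/
def QcountI0 (A : Matrix V V ℤ) (δ : V → ℕ) (I : Set V) (x : V → ℤ) : ℤ :=
  ∑ᶠ l : V → ℤ,
    if ¬ (∀ v ∈ I, x v ≤ l v) then zcoef A δ (fun v => (l v : ℚ)) else 0

/-- The modified counting function `q_{[x],J}(x)`. -/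
def qmod (A : Matrix V V ℤ) (δ : V → ℕ) (J : Set V) (x : V → ℚ) : ℤ :=
  ∑ᶠ l' : V → ℚ,
    if memLp A l' ∧ sameClass l' x ∧ (∀ v ∈ J, l' v < x v) then zcoef A δ l' else 0

/-- The coefficient function of the reduced series `Z(t_W)`. -/
def zred (A : Matrix V V ℤ) (δ : V → ℕ) (W : Set V) (y : W → ℚ) : ℤ :=
  ∑ᶠ l' : V → ℚ, if (fun w : W => l' w.1) = y then zcoef A δ l' else 0

/-- The intersection matrix of a full subgraph. -/
def subM (A : Matrix V V ℤ) (W : Set V) : Matrix W W ℤ :=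
  A.submatrix Subtype.val Subtype.val

/-- The restriction operator `j*_W : L'(T) → L'(T(W))`. -/
def jstar (A : Matrix V V ℤ) (W : Set V) (l' : V → ℚ) : W → ℚ :=
  (Aq (subM A W))⁻¹.mulVec fun w => (Aq A).mulVec l' w.1

/-- The canonical cycle `K`, the unique solution of `(K + E_v, E_v) = -2`. -/
def Kcan (A : Matrix V V ℤ) : V → ℚ :=
  (Aq A)⁻¹.mulVec fun v => (-2 : ℚ) - (A v v : ℚ)

/-- The Riemann–Roch expression `χ(x) = -(x, x + K)/2`. -/
def chi (A : Matrix V V ℤ) (x : V → ℚ) : ℚ :=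
  -(x ⬝ᵥ (Aq A).mulVec (x + Kcan A)) / 2

/-- The weight `w(l, J)` of the lattice cube `(l, J)`. -/
def wcube (A : Matrix V V ℤ) (l : V → ℤ) (J : Finset V) : ℚ :=
  J.powerset.sup' ⟨∅, Finset.empty_mem_powerset J⟩
    fun J' => chi A fun v => (l v : ℚ) + if v ∈ J' then 1 else 0

/-- Quasipolynomials on `ℤ^W`: polynomial on each coset of a finite index subgroup. -/
def IsQuasiPoly {W : Type*} [Fintype W] (Q : (W → ℤ) → ℚ) : Prop :=
  ∃ Λ : AddSubgroup (W → ℤ), Λ.index ≠ 0 ∧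
    ∀ c : W → ℤ, ∃ p : MvPolynomial W ℚ,
      ∀ l ∈ Λ, Q (c + l) = MvPolynomial.eval (fun w => ((c + l) w : ℚ)) p

/-- The vertex set of the connected component `c` of the complement of `I`. -/
def compSet (G : SimpleGraph V) (I : Set V) (c : (G.induce Iᶜ).ConnectedComponent) :
    Set V :=
  {v : V | ∃ h : v ∈ (Iᶜ : Set V), (G.induce Iᶜ).connectedComponentMk ⟨v, h⟩ = c}

/-- The boundary of a subset `V2` of the vertices. -/
def Bdry (G : SimpleGraph V) (V2 : Set V) : Set V :=
  {u ∈ V2 | ∃ w, w ∉ V2 ∧ G.Adj u w}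

/-- `V_{1,u}` : the vertex `u` together with the vertex sets of all connected
components of the complement of `V2` adjacent to `u`. -/
def V1u (G : SimpleGraph V) (V2 : Set V) (u : V) : Set V :=
  insert u {v : V | ∃ h : v ∈ (V2ᶜ : Set V), ∃ w, ∃ hw : w ∈ (V2ᶜ : Set V),
    G.Adj u w ∧ (G.induce V2ᶜ).connectedComponentMk ⟨v, h⟩ =
      (G.induce V2ᶜ).connectedComponentMk ⟨w, hw⟩}

end Plumbing

open Plumbing

namespace Statement9Aux

open Matrix

variable {W : Type*} [Fintype W] [DecidableEq W]

lemma isUnit_of_negdef (N : Matrix W W ℚ)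
    (h : ∀ x : W → ℚ, x ≠ 0 → x ⬝ᵥ N.mulVec x < 0) : IsUnit N := by
  rw [Matrix.isUnit_iff_isUnit_det, isUnit_iff_ne_zero]
  intro hdet
  obtain ⟨x, hx0, hx⟩ := (Matrix.exists_mulVec_eq_zero_iff).2 hdet
  have := h x hx0
  rw [hx] at this
  simp at this

lemma negdef_inv (N : Matrix W W ℚ)
    (h : ∀ x : W → ℚ, x ≠ 0 → x ⬝ᵥ N.mulVec x < 0) :
    ∀ x : W → ℚ, x ≠ 0 → x ⬝ᵥ N⁻¹.mulVec x < 0 := by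
  have hu := isUnit_of_negdef N h
  have hdet := (Matrix.isUnit_iff_isUnit_det N).1 hu
  intro x hx
  set y := N⁻¹.mulVec x with hy
  have hxy : N.mulVec y = x := by
    rw [hy, Matrix.mulVec_mulVec, Matrix.mul_nonsing_inv _ hdet, Matrix.one_mulVec]
  have hy0 : y ≠ 0 := by
    intro h0
    apply hx
    rw [← hxy, h0, Matrix.mulVec_zero]
  calc x ⬝ᵥ N⁻¹.mulVec x = N.mulVec y ⬝ᵥ y := by rw [hxy]
    _ = y ⬝ᵥ N.mulVec y := dotProduct_comm _ _
    _ < 0 := h y hy0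

lemma sum_of_injective {W W' : Type*} [Fintype W] [Fintype W'] [DecidableEq W]
    (f : W' → W) (hf : Function.Injective f) (g : W → ℚ)
    (hg : ∀ v, (∀ w, f w ≠ v) → g v = 0) :
    ∑ w, g (f w) = ∑ v, g v := by
  rw [← Finset.sum_image (f := g) (g := f) (fun a _ b _ h => hf h)]
  refine Finset.sum_subset (Finset.subset_univ _) ?_
  intro v _ hv
  refine hg v fun w hw => hv ?_
  rw [Finset.mem_image]
  exact ⟨w, Finset.mem_univ w, hw⟩

lemma sum_split' {W W1 W2 : Type*} [Fintype W] [Fintype W1] [Fintype W2] [DecidableEq W]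
    (e2 : W2 → W) (e1 : W1 → W) (h2 : Function.Injective e2) (h1 : Function.Injective e1)
    (hdisj : ∀ w2 w1, e2 w2 ≠ e1 w1)
    (hcover : ∀ v, (∃ w, e2 w = v) ∨ (∃ w, e1 w = v)) (g : W → ℚ) :
    ∑ v, g v = ∑ w : W2, g (e2 w) + ∑ w : W1, g (e1 w) := by
  classical
  rw [← Finset.sum_image (f := g) (g := e2) (fun a _ b _ h => h2 h),
      ← Finset.sum_image (f := g) (g := e1) (fun a _ b _ h => h1 h),
      ← Finset.sum_union ?_]
  · refine (Finset.sum_subset (Finset.subset_univ _) ?_).symm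
    intro v _ hv
    exfalso
    rcases hcover v with ⟨w, hw⟩ | ⟨w, hw⟩
    · exact hv (Finset.mem_union_left _ (Finset.mem_image.2 ⟨w, Finset.mem_univ w, hw⟩))
    · exact hv (Finset.mem_union_right _ (Finset.mem_image.2 ⟨w, Finset.mem_univ w, hw⟩))
  · rw [Finset.disjoint_left]
    rintro v hv2 hv1
    obtain ⟨a, -, rfl⟩ := Finset.mem_image.1 hv2
    obtain ⟨b, -, hb⟩ := Finset.mem_image.1 hv1
    exact hdisj a b hb.symm

lemma negdef_submatrix' {W W' : Type*} [Fintype W] [Fintype W'] [DecidableEq W]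
    (N : Matrix W W ℚ) (h : ∀ x : W → ℚ, x ≠ 0 → x ⬝ᵥ N.mulVec x < 0)
    (f : W' → W) (hf : Function.Injective f) :
    ∀ x : W' → ℚ, x ≠ 0 → x ⬝ᵥ (N.submatrix f f).mulVec x < 0 := by
  classical
  intro x hx
  set xt : W → ℚ := fun v => if h : ∃ w, f w = v then x h.choose else 0 with hxt
  have hxtf : ∀ w, xt (f w) = x w := by
    intro w
    have he : ∃ w', f w' = f w := ⟨w, rfl⟩
    have hch : he.choose = w := hf he.choose_spec
    simp [hxt, dif_pos he, hch]
  have hxt0' : ∀ v, (∀ w, f w ≠ v) → xt v = 0 := by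
    intro v hv
    have hne : ¬ ∃ w, f w = v := fun ⟨w, hw⟩ => hv w hw
    simp [hxt, dif_neg hne]
  have hxt0 : xt ≠ 0 := by
    intro h0
    apply hx
    funext w
    have := congrFun h0 (f w)
    rw [hxtf w] at this
    simpa using this
  have inner : ∀ v : W, ∑ w' : W', N v (f w') * x w' = ∑ w, N v w * xt w := by
    intro v
    rw [← sum_of_injective f hf (fun w => N v w * xt w)
      (by intro u hu; show N v u * xt u = 0; rw [hxt0' u hu]; ring)]
    exact Finset.sum_congr rfl fun w _ => by rw [hxtf]
  have key : x ⬝ᵥ ((N.submatrix f f).mulVec x) = xt ⬝ᵥ N.mulVec xt := by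
    simp only [dotProduct, Matrix.mulVec, Matrix.submatrix_apply]
    rw [← sum_of_injective f hf (fun v => xt v * ∑ w, N v w * xt w)
      (by intro u hu; show xt u * _ = 0; rw [hxt0' u hu]; ring)]
    refine Finset.sum_congr rfl fun w _ => ?_
    rw [hxtf, ← inner]
  rw [key]
  exact h xt hxt0

lemma inv_zero_of_not_reachable (H : SimpleGraph W) (N : Matrix W W ℚ)
    (hadj : ∀ a b : W, a ≠ b → ¬ H.Adj a b → N a b = 0)
    (hu : IsUnit N) (a b : W) (hr : ¬ H.Reachable a b) : N⁻¹ a b = 0 := by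
  classical
  set P : Matrix W W ℚ := Matrix.of fun c d => if H.Reachable c d then N⁻¹ c d else 0 with hP
  have hNP : N * P = 1 := by
    ext c d
    by_cases hcd : H.Reachable c d
    · have he : ∀ e, N c e * P e d = N c e * N⁻¹ e d := by
        intro e
        by_cases hed : H.Reachable e d
        · simp [hP, hed]
        · have hce : N c e = 0 := by
            rcases eq_or_ne c e with rfl | hne
            · exact absurd hcd hed
            · exact hadj c e hne fun hadj' => hed ((SimpleGraph.Adj.symm hadj').reachable.trans hcd)
          simp [hce]
      rw [Matrix.mul_apply]
      simp_rw [he]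
      rw [← Matrix.mul_apply, Matrix.mul_nonsing_inv _ ((Matrix.isUnit_iff_isUnit_det N).1 hu)]
    · have hcd' : c ≠ d := by
        rintro rfl
        exact hcd (SimpleGraph.Reachable.refl c)
      have he : ∀ e, N c e * P e d = 0 := by
        intro e
        by_cases hed : H.Reachable e d
        · have hce : N c e = 0 := by
            rcases eq_or_ne c e with rfl | hne
            · exact absurd hed hcd
            · exact hadj c e hne fun hadj' => hcd (hadj'.reachable.trans hed)
          simp [hce]
        · simp [hP, hed]
      rw [Matrix.mul_apply]
      simp [he, Matrix.one_apply, hcd']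
  have hPinv : N⁻¹ = P := Matrix.inv_eq_right_inv hNP
  rw [hPinv]
  simp [hP, hr]

end Statement9Aux


set_option maxHeartbeats 1600000 in
/-- the matrix of the restrictions `−E*_v|_{V₂}` is the inverse of a
negative definite symmetric matrix which is a modification of the intersection form of
the full subgraph on `V₂` along the diagonal entries of the boundary. -/
theorem statement9 (V : Type) [Fintype V] [DecidableEq V]
    (G : SimpleGraph V) (hG : G.IsTree)
    (A : Matrix V V ℤ) (hAsymm : A.IsSymm)
    (hAadj : ∀ v w : V, v ≠ w → A v w = if G.Adj v w then 1 else 0)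
    (hAneg : NegDef A)
    (V2 : Set V) (hV2conn : (G.induce V2).Connected)
    (M : Matrix V2 V2 ℚ)
    (hM : M = ((Aq A)⁻¹).submatrix Subtype.val Subtype.val) :
    IsUnit M ∧ (M⁻¹).IsSymm ∧
    (∀ x : V2 → ℚ, x ≠ 0 → x ⬝ᵥ (M⁻¹).mulVec x < 0) ∧
    (∀ w v : V2, w ≠ v → M⁻¹ w v = ((A w.1 v.1 : ℤ) : ℚ)) ∧
    (∀ v : V2, v.1 ∉ Bdry G V2 → M⁻¹ v v = ((A v.1 v.1 : ℤ) : ℚ)) := by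
  classical
  subst hM
  have hAneg' : ∀ x : V → ℚ, x ≠ 0 → x ⬝ᵥ (Aq A).mulVec x < 0 := hAneg
  have hAunit : IsUnit (Aq A) := Statement9Aux.isUnit_of_negdef _ hAneg'
  have hAdet := (Matrix.isUnit_iff_isUnit_det _).1 hAunit
  have hAB : Aq A * (Aq A)⁻¹ = 1 := Matrix.mul_nonsing_inv _ hAdet
  have hBneg := Statement9Aux.negdef_inv _ hAneg'
  set B : Matrix V V ℚ := (Aq A)⁻¹ with hBdef
  set M : Matrix V2 V2 ℚ := B.submatrix Subtype.val Subtype.val with hMdef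
  -- symmetry of Aq A and B
  have hAqsymm : (Aq A)ᵀ = Aq A := by
    ext v w
    simp only [Matrix.transpose_apply, Aq, Matrix.map_apply]
    rw [Matrix.IsSymm.apply hAsymm]
  have hBsymm : Bᵀ = B := by
    rw [hBdef, Matrix.transpose_nonsing_inv, hAqsymm]
  -- blocks
  set A11 : Matrix ↥(V2ᶜ) ↥(V2ᶜ) ℚ :=
    (Aq A).submatrix (Subtype.val : ↥(V2ᶜ) → V) Subtype.val with hA11
  set A12 : Matrix ↥(V2ᶜ) ↥V2 ℚ :=
    (Aq A).submatrix (Subtype.val : ↥(V2ᶜ) → V) Subtype.val with hA12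
  set A21 : Matrix ↥V2 ↥(V2ᶜ) ℚ :=
    (Aq A).submatrix (Subtype.val : ↥V2 → V) Subtype.val with hA21
  set A22 : Matrix ↥V2 ↥V2 ℚ :=
    (Aq A).submatrix (Subtype.val : ↥V2 → V) Subtype.val with hA22
  set B12 : Matrix ↥(V2ᶜ) ↥V2 ℚ :=
    B.submatrix (Subtype.val : ↥(V2ᶜ) → V) Subtype.val with hB12
  have hA11neg := Statement9Aux.negdef_submatrix' _ hAneg'
    (Subtype.val : ↥(V2ᶜ) → V) Subtype.val_injective
  rw [← hA11] at hA11neg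
  have hA11unit : IsUnit A11 := Statement9Aux.isUnit_of_negdef _ hA11neg
  have hA11det := (Matrix.isUnit_iff_isUnit_det A11).1 hA11unit
  have hsplitV : ∀ g : V → ℚ, ∑ u, g u = (∑ w : V2, g w.1) + ∑ w : ↥(V2ᶜ), g w.1 := by
    intro g
    refine Statement9Aux.sum_split' (Subtype.val : ↥V2 → V) (Subtype.val : ↥(V2ᶜ) → V)
      Subtype.val_injective Subtype.val_injective (fun w2 w1 h => w1.2 (h ▸ w2.2)) ?_ g
    intro u
    by_cases h : u ∈ V2
    · exact Or.inl ⟨⟨u, h⟩, rfl⟩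
    · exact Or.inr ⟨⟨u, Set.mem_compl h⟩, rfl⟩
  have hE2 : A11 * B12 + A12 * M = 0 := by
    ext a v
    have hone : (Aq A * B) a.1 v.1 = 0 := by
      rw [hAB]
      have : a.1 ≠ v.1 := by
        intro h
        exact a.2 (h ▸ v.2)
      simp [Matrix.one_apply, this]
    rw [Matrix.mul_apply] at hone
    rw [hsplitV (fun u => Aq A a.1 u * B u v.1)] at hone
    simpa [Matrix.add_apply, Matrix.mul_apply, hA11, hA12, hMdef, hB12, add_comm] using hone
  have hE1 : A21 * B12 + A22 * M = 1 := by
    ext w v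
    have hone : (Aq A * B) w.1 v.1 = (1 : Matrix ↥V2 ↥V2 ℚ) w v := by
      rw [hAB]
      by_cases h : w = v
      · subst h; simp [Matrix.one_apply]
      · have : w.1 ≠ v.1 := fun hh => h (Subtype.ext hh)
        simp [Matrix.one_apply, this, h]
    rw [Matrix.mul_apply] at hone
    rw [hsplitV (fun u => Aq A w.1 u * B u v.1)] at hone
    simpa [Matrix.add_apply, Matrix.mul_apply, hA21, hA22, hMdef, hB12, add_comm] using hone
  set S : Matrix ↥V2 ↥V2 ℚ := A22 - A21 * A11⁻¹ * A12 with hSdef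
  have h2 : A12 * M = -(A11 * B12) := eq_neg_of_add_eq_zero_left (by rw [add_comm]; exact hE2)
  have h3 : A11⁻¹ * (A12 * M) = -B12 := by
    rw [h2, Matrix.mul_neg, ← Matrix.mul_assoc, Matrix.nonsing_inv_mul _ hA11det, Matrix.one_mul]
  have hSM : S * M = 1 := by
    calc S * M = A22 * M - A21 * (A11⁻¹ * (A12 * M)) := by
          rw [hSdef, Matrix.sub_mul, Matrix.mul_assoc, Matrix.mul_assoc]
      _ = A22 * M + A21 * B12 := by rw [h3, Matrix.mul_neg, sub_neg_eq_add]
      _ = 1 := by rw [← hE1]; exact add_comm _ _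
  have hMunit : IsUnit M := (Matrix.isUnit_iff_isUnit_det M).2 (Matrix.isUnit_det_of_left_inverse hSM)
  have hMinv : M⁻¹ = S := Matrix.inv_eq_left_inv hSM
  have hMsymm : Mᵀ = M := by
    ext w v
    simp only [Matrix.transpose_apply, hMdef, Matrix.submatrix_apply]
    conv_lhs => rw [← hBsymm]
    rfl
  have hMneg := Statement9Aux.negdef_submatrix' _ hBneg
    (Subtype.val : ↥V2 → V) Subtype.val_injective
  rw [← hMdef] at hMneg
  -- the correction term vanishes off the diagonal and off the boundary
  have hA11inv_zero : ∀ a b : ↥(V2ᶜ), ¬ (G.induce (V2ᶜ)).Reachable a b → A11⁻¹ a b = 0 := by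
    intro a b hr
    refine Statement9Aux.inv_zero_of_not_reachable (G.induce (V2ᶜ)) A11 ?_ hA11unit a b hr
    intro c d hne hnadj
    have hcd : c.1 ≠ d.1 := fun hh => hne (Subtype.ext hh)
    have : ¬ G.Adj c.1 d.1 := by
      intro h
      exact hnadj (by simpa using h)
    simp [hA11, Matrix.submatrix_apply, Aq, Matrix.map_apply, hAadj c.1 d.1 hcd, this]
  -- tree detour lemma
  have htree : ∀ (w v : ↥V2) (a b : ↥(V2ᶜ)), w ≠ v → G.Adj w.1 a.1 → G.Adj b.1 v.1 →
      (G.induce (V2ᶜ)).Reachable a b → False := by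
    intro w v a b hwv hwa hbv hr
    obtain ⟨r⟩ := hr
    obtain ⟨q⟩ := hV2conn.preconnected ⟨w.1, w.2⟩ ⟨v.1, v.2⟩
    -- path inside V2
    let q' : G.Walk w.1 v.1 := q.map (SimpleGraph.Embedding.induce V2).toHom
    have hq'supp : ∀ x ∈ q'.support, x ∈ V2 := by
      intro x hx
      rw [show q'.support = _ from SimpleGraph.Walk.support_map _ _] at hx
      obtain ⟨y, _, rfl⟩ := List.mem_map.1 hx
      exact y.2
    let p1 := q'.toPath
    have hp1supp : ∀ x ∈ (p1 : G.Walk w.1 v.1).support, x ∈ V2 := fun x hx =>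
      hq'supp x (SimpleGraph.Walk.support_toPath_subset q' hx)
    -- path through the complement
    let r' : G.Walk a.1 b.1 := r.map (SimpleGraph.Embedding.induce (V2ᶜ)).toHom
    have hr'supp : ∀ x ∈ r'.support, x ∉ V2 := by
      intro x hx
      rw [show r'.support = _ from SimpleGraph.Walk.support_map _ _] at hx
      obtain ⟨y, _, rfl⟩ := List.mem_map.1 hx
      exact y.2
    let π : G.Walk a.1 b.1 := (r'.toPath : G.Walk a.1 b.1)
    have hπpath : π.IsPath := r'.toPath.2
    have hπsupp : ∀ x ∈ π.support, x ∉ V2 := fun x hx =>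
      hr'supp x (SimpleGraph.Walk.support_toPath_subset r' hx)
    let inner : G.Walk a.1 v.1 := π.concat hbv
    let outer : G.Walk w.1 v.1 := SimpleGraph.Walk.cons hwa inner
    have houter : outer.IsPath := by
      have hvπ : v.1 ∉ π.support := fun h => hπsupp v.1 h v.2
      have hwπ : w.1 ∉ π.support := fun h => hπsupp w.1 h w.2
      have hwv' : w.1 ≠ v.1 := fun hh => hwv (Subtype.ext hh)
      have hsupp : outer.support = w.1 :: (π.support ++ [v.1]) := by
        simp [outer, inner, SimpleGraph.Walk.support_cons,
          SimpleGraph.Walk.support_concat, List.concat_eq_append]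
      rw [SimpleGraph.Walk.isPath_def, hsupp]
      refine List.nodup_cons.2 ⟨?_,
        List.Nodup.append hπpath.support_nodup (List.nodup_singleton _) ?_⟩
      · intro hmem
        rcases List.mem_append.1 hmem with h | h
        · exact hwπ h
        · exact hwv' (List.mem_singleton.1 h)
      · intro x hx hx'
        exact hπsupp x hx ((List.mem_singleton.1 hx') ▸ v.2)
    have huniq := hG.existsUnique_path w.1 v.1
    obtain ⟨p, -, hp⟩ := huniq
    have h1 : (p1 : G.Walk w.1 v.1) = p := hp _ p1.2
    have h2' : outer = p := hp _ houter
    have haouter : a.1 ∈ outer.support := by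
      simp [outer, inner, SimpleGraph.Walk.support_cons]
    rw [h2', ← h1] at haouter
    exact a.2 (hp1supp a.1 haouter)
  have hcorr : ∀ w v : ↥V2, (w ≠ v ∨ v.1 ∉ Bdry G V2) → (A21 * A11⁻¹ * A12) w v = 0 := by
    intro w v hcase
    rw [Matrix.mul_apply]
    refine Finset.sum_eq_zero fun b _ => ?_
    rw [Matrix.mul_apply, Finset.sum_mul]
    refine Finset.sum_eq_zero fun a _ => ?_
    by_cases hwa : G.Adj w.1 a.1
    · by_cases hbv : G.Adj b.1 v.1
      · rcases hcase with hwv | hvB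
        · have hr : ¬ (G.induce (V2ᶜ)).Reachable a b := fun hr =>
            htree w v a b hwv hwa hbv hr
          rw [hA11inv_zero a b hr]
          ring
        · exact absurd ⟨v.2, b.1, b.2, hbv.symm⟩ hvB
      · have hb : b.1 ≠ v.1 := by
          intro h
          exact b.2 (h ▸ v.2)
        have : A12 b v = 0 := by
          simp [hA12, Matrix.submatrix_apply, Aq, Matrix.map_apply, hAadj b.1 v.1 hb, hbv]
        rw [this]
        ring
    · have hw : w.1 ≠ a.1 := by
        intro h
        exact a.2 (h ▸ w.2)
      have : A21 w a = 0 := by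
        simp [hA21, Matrix.submatrix_apply, Aq, Matrix.map_apply, hAadj w.1 a.1 hw, hwa]
      rw [this]
      ring
  refine ⟨hMunit, ?_, ?_, ?_, ?_⟩
  · -- symmetry of M⁻¹
    rw [Matrix.IsSymm, Matrix.transpose_nonsing_inv, hMsymm]
  · -- negative definiteness of M⁻¹
    exact Statement9Aux.negdef_inv M hMneg
  · intro w v hwv
    rw [hMinv, hSdef, Matrix.sub_apply, hcorr w v (Or.inl hwv), sub_zero]
    simp [hA22, Matrix.submatrix_apply, Aq, Matrix.map_apply]
  · intro v hvB
    rw [hMinv, hSdef, Matrix.sub_apply, hcorr v v (Or.inr hvB), sub_zero]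
    simp [hA22, Matrix.submatrix_apply, Aq, Matrix.map_apply]
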